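/- arXiv:math/0103241 — 3 statements merged into one kernel-verified Lean document; each statement's English description precedes it below -/
import Mathlib

section
/- For p = 3, q = 5, with 𝐚_{3·5} = [1/3] + [2/15] - [4/15] - [1/5], one has the numerical identity (2sin(π/3) · 2sin(2π/15)) / (2sin(4π/15) · 2sin(π/5)) = Γ(4/15)²Γ(1/5)² / (Γ(1/3)²Γ(2/15)²) · 3^{2/5} · 5^{-1/6}. Equivalently, Γ(4/15)Γ(1/5)/(Γ(1/3)Γ(2/15)) = 3^{-1/5}·5^{1/12}·sqrt( sin(π/3)·sin(2π/15) / (sin(4π/15)·sin(π/5)) ). -/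
open Real Filter Finset Topology

lemma my_prod_split (p : ℕ) (f : ℕ → ℝ) : ∀ n : ℕ,
    ∏ m ∈ range (p * n), f m = ∏ j ∈ range n, ∏ k ∈ range p, f (p * j + k) := by
  intro n
  induction n with
  | zero => simp
  | succ n ih =>
    rw [Finset.prod_range_succ, ← ih, Nat.mul_succ, Finset.prod_range_add]

lemma my_rpow_sum {x : ℝ} (hx : 0 < x) (s : Finset ℕ) (f : ℕ → ℝ) :
    x ^ (∑ k ∈ s, f k) = ∏ k ∈ s, x ^ (f k) := by
  classical
  induction s using Finset.cons_induction with
  | empty => simp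
  | cons a s ha ih => rw [Finset.sum_cons, Finset.prod_cons, Real.rpow_add hx, ih]

lemma my_sum_range (p : ℕ) : ∑ k ∈ range p, (k : ℝ) = p * (p - 1) / 2 := by
  induction p with
  | zero => simp
  | succ n ih => rw [Finset.sum_range_succ, ih]; push_cast; ring

lemma my_key_ratio (p : ℕ) (hp : 1 ≤ p) (w : ℝ) (n : ℕ) (hn : 1 ≤ n) :
    (∏ k ∈ range p, Real.GammaSeq ((w + k) / p) n) *
        (((p * (n + 1) - 1 : ℕ) : ℝ) ^ w * ((p * (n + 1) - 1).factorial : ℝ))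
      = Real.GammaSeq w (p * (n + 1) - 1) *
        ((n : ℝ) ^ w * (n : ℝ) ^ (((p : ℝ) - 1) / 2) * ((n.factorial : ℝ)) ^ p *
          (p : ℝ) ^ (p * (n + 1))) := by
  have hp0 : (0:ℝ) < p := by positivity
  have hn0 : (0:ℝ) < n := by exact_mod_cast hn
  have hN : (p * (n + 1) - 1) + 1 = p * (n + 1) := by
    have : 1 ≤ p * (n + 1) := Nat.one_le_iff_ne_zero.mpr (by positivity)
    omega
  -- the common denominator
  set Q : ℝ := ∏ m ∈ range (p * (n + 1)), (w + m) with hQ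
  have hPk : ∏ k ∈ range p, (∏ j ∈ range (n + 1), ((w + k) / p + j))
      = Q / (p : ℝ) ^ (p * (n + 1)) := by
    rw [hQ, my_prod_split p (fun m => w + m) (n + 1), Finset.prod_comm]
    have step1 : ∀ y ∈ range (n+1), ∀ x ∈ range p,
        ((w + x) / p + y) = (w + ((p * y + x : ℕ) : ℝ)) / p := by
      intro y _ x _
      push_cast
      field_simp
      ring
    calc ∏ y ∈ range (n+1), ∏ x ∈ range p, ((w + x) / p + y)
        = ∏ y ∈ range (n+1), ∏ x ∈ range p, ((w + ((p * y + x : ℕ) : ℝ)) / p) :=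
          Finset.prod_congr rfl fun y hy => Finset.prod_congr rfl fun x hx => step1 y hy x hx
      _ = ∏ y ∈ range (n+1), ((∏ x ∈ range p, (w + ((p * y + x : ℕ) : ℝ))) / (p:ℝ) ^ p) := by
          refine Finset.prod_congr rfl fun y _ => ?_
          rw [Finset.prod_div_distrib, Finset.prod_const, Finset.card_range]
      _ = (∏ y ∈ range (n+1), ∏ x ∈ range p, (w + ((p * y + x : ℕ) : ℝ))) / ((p:ℝ) ^ p) ^ (n+1) := by
          rw [Finset.prod_div_distrib, Finset.prod_const, Finset.card_range]
      _ = (∏ j ∈ range (n + 1), ∏ k ∈ range p, (w + ↑(p * j + k))) / ↑p ^ (p * (n + 1)) := by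
          rw [← pow_mul]
  have hpow : ∏ k ∈ range p, (n:ℝ) ^ ((w + k) / p) = (n:ℝ) ^ w * (n:ℝ) ^ (((p:ℝ) - 1) / 2) := by
    rw [← my_rpow_sum hn0, ← Real.rpow_add hn0]
    congr 1
    rw [← Finset.sum_div, Finset.sum_add_distrib, Finset.sum_const, Finset.card_range,
      my_sum_range]
    field_simp
    ring
  simp only [Real.GammaSeq]
  rw [Finset.prod_div_distrib, Finset.prod_mul_distrib, Finset.prod_const, Finset.card_range,
    hPk, hN, hpow, div_div_eq_mul_div]
  ring

lemma my_gauss_aux (p : ℕ) (hp : 1 ≤ p) (w : ℝ) (hw : 0 < w) :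
    Tendsto (fun n : ℕ => (n : ℝ) ^ (((p : ℝ) - 1) / 2) * ((n.factorial : ℝ)) ^ p *
        (p : ℝ) ^ (p * (n + 1)) / (((p * (n + 1) - 1).factorial : ℝ)))
      atTop (𝓝 ((p : ℝ) ^ w * (∏ k ∈ range p, Real.Gamma ((w + k) / p)) / Real.Gamma w)) := by
  have hp0 : (0:ℝ) < p := by positivity
  -- limit of the w-dependent representation
  have h1 : Tendsto (fun n : ℕ => ∏ k ∈ range p, Real.GammaSeq ((w + k) / p) n) atTop
      (𝓝 (∏ k ∈ range p, Real.Gamma ((w + k) / p))) :=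
    tendsto_finset_prod _ fun k _ => Real.GammaSeq_tendsto_Gamma _
  have hmono : Tendsto (fun n : ℕ => p * (n + 1) - 1) atTop atTop := by
    apply tendsto_atTop_mono (f := fun n : ℕ => n)
    · intro n
      have : 1 * (n + 1) ≤ p * (n + 1) := Nat.mul_le_mul_right _ hp
      omega
    · exact tendsto_id
  have h2 : Tendsto (fun n : ℕ => Real.GammaSeq w (p * (n + 1) - 1)) atTop (𝓝 (Real.Gamma w)) :=
    (Real.GammaSeq_tendsto_Gamma w).comp hmono
  have h3 : Tendsto (fun n : ℕ => (((p * (n + 1) - 1 : ℕ) : ℝ) / n) ^ w) atTop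
      (𝓝 ((p : ℝ) ^ w)) := by
    have hq : Tendsto (fun n : ℕ => ((p * (n + 1) - 1 : ℕ) : ℝ) / n) atTop (𝓝 (p : ℝ)) := by
      have key : ∀ᶠ n : ℕ in atTop, ((p * (n + 1) - 1 : ℕ) : ℝ) / n
          = p + ((p : ℝ) - 1) / n := by
        filter_upwards [eventually_ge_atTop 1] with n hn
        have hn0 : (0:ℝ) < n := by exact_mod_cast hn
        have hc : ((p * (n + 1) - 1 : ℕ) : ℝ) = p * (n + 1) - 1 := by
          have : 1 ≤ p * (n + 1) := Nat.one_le_iff_ne_zero.mpr (by positivity)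
          push_cast [this]
          ring
        rw [hc]
        field_simp
        ring
      rw [tendsto_congr' key]
      have := tendsto_const_nhds (x := (p:ℝ)) (f := atTop (α := ℕ))
      have hd : Tendsto (fun n : ℕ => ((p : ℝ) - 1) / n) atTop (𝓝 0) :=
        tendsto_const_div_atTop_nhds_zero_nat _
      simpa using this.add hd
    exact (hq.rpow tendsto_const_nhds (Or.inl (ne_of_gt hp0)))
  have hGw : Real.Gamma w ≠ 0 := ne_of_gt (Real.Gamma_pos_of_pos hw)
  have main : Tendsto (fun n : ℕ => (((p * (n + 1) - 1 : ℕ) : ℝ) / n) ^ w *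
      ((∏ k ∈ range p, Real.GammaSeq ((w + k) / p) n) / Real.GammaSeq w (p * (n + 1) - 1)))
      atTop (𝓝 ((p : ℝ) ^ w * ((∏ k ∈ range p, Real.Gamma ((w + k) / p)) / Real.Gamma w))) :=
    h3.mul (h1.div h2 hGw)
  rw [← mul_div_assoc] at main
  refine main.congr' ?_
  filter_upwards [eventually_ge_atTop 1] with n hn
  have hn0 : (0:ℝ) < n := by exact_mod_cast hn
  have hkey := my_key_ratio p hp w n hn
  have hNpos : 0 < (((p * (n + 1) - 1 : ℕ) : ℝ)) := by
    have : 1 ≤ p * (n + 1) := Nat.one_le_iff_ne_zero.mpr (by positivity)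
    have h1N : 1 ≤ p * (n + 1) - 1 + 1 := by omega
    have : 1 ≤ p * (n+1) - 1 ∨ p * (n+1) - 1 = 0 := by omega
    rcases this with h | h
    · exact_mod_cast Nat.lt_of_lt_of_le Nat.zero_lt_one h
    · -- then p = 1, n = 0, contradiction with hn ≥ 1? p*(n+1)=1 means n=0
      exfalso
      have := Nat.eq_one_of_mul_eq_one_left (by omega : p * (n+1) = 1)
      omega
  have hGS : 0 < Real.GammaSeq w (p * (n + 1) - 1) := by
    rw [Real.GammaSeq]
    have : 0 < ∏ j ∈ range ((p * (n + 1) - 1) + 1), (w + j) :=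
      Finset.prod_pos fun j _ => by positivity
    positivity
  have hNw : (0:ℝ) < (((p * (n + 1) - 1 : ℕ) : ℝ)) ^ w := Real.rpow_pos_of_pos hNpos _
  have hfac : (0:ℝ) < (((p * (n + 1) - 1).factorial : ℝ)) := by positivity
  -- from hkey solve
  rw [Real.div_rpow (le_of_lt hNpos) (le_of_lt hn0)]
  have hnw : (0:ℝ) < (n:ℝ) ^ w := Real.rpow_pos_of_pos hn0 _
  have step : (((p * (n + 1) - 1 : ℕ) : ℝ) ^ w / (n:ℝ) ^ w) *
      ((∏ k ∈ range p, Real.GammaSeq ((w + k) / p) n) / Real.GammaSeq w (p * (n + 1) - 1))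
      = (((p * (n + 1) - 1 : ℕ) : ℝ) ^ w * ∏ k ∈ range p, Real.GammaSeq ((w + k) / p) n) /
        ((n:ℝ) ^ w * Real.GammaSeq w (p * (n + 1) - 1)) := by ring
  rw [step, div_eq_div_iff (by positivity) (ne_of_gt hfac)]
  linear_combination hkey

lemma my_gauss_mul (p : ℕ) (hp : 1 ≤ p) {w : ℝ} (hw : 0 < w) :
    ∏ k ∈ range p, Real.Gamma ((w + k) / p)
      = ((p : ℝ) * ∏ k ∈ range p, Real.Gamma ((1 + k) / p)) * (p : ℝ) ^ (-w) * Real.Gamma w := by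
  have hp0 : (0:ℝ) < p := by positivity
  have h := tendsto_nhds_unique (my_gauss_aux p hp w hw) (my_gauss_aux p hp 1 one_pos)
  rw [Real.Gamma_one, Real.rpow_one, div_one] at h
  have hGw : (0:ℝ) < Real.Gamma w := Real.Gamma_pos_of_pos hw
  have hpw : (0:ℝ) < (p:ℝ) ^ w := Real.rpow_pos_of_pos hp0 _
  have hneg : (p:ℝ) ^ (-w) = ((p:ℝ) ^ w)⁻¹ := Real.rpow_neg (le_of_lt hp0) w
  rw [div_eq_iff (ne_of_gt hGw)] at h
  rw [hneg]
  field_simp at h ⊢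
  linarith [h]

lemma my_trip {w : ℝ} (hw : 0 < w) :
    Real.Gamma (w/3) * Real.Gamma ((w+1)/3) * Real.Gamma ((w+2)/3)
      = 2 * Real.sqrt 3 * π * (3:ℝ) ^ (-w) * Real.Gamma w := by
  have h := my_gauss_mul 3 (by norm_num) hw
  norm_num [Finset.prod_range_succ] at h
  rw [h]
  have hrefl := Real.Gamma_mul_Gamma_one_sub (1/3)
  norm_num at hrefl
  rw [show π * (1/3) = π/3 by ring, Real.sin_pi_div_three] at hrefl
  have h3 : Real.sqrt 3 * Real.sqrt 3 = 3 := Real.mul_self_sqrt (by norm_num)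
  have h3pos : (0:ℝ) < Real.sqrt 3 := by positivity
  have hconst : Real.Gamma (1/3) * Real.Gamma (2/3) = 2 * Real.sqrt 3 * π / 3 := by
    rw [hrefl, div_eq_div_iff (by positivity) (by norm_num)]
    linear_combination (-π) * h3
  rw [hconst]
  field_simp

lemma my_sin_prod : Real.sin (π/5) * Real.sin (2*π/5) = Real.sqrt 5 / 4 := by
  have hc : Real.cos (π/5) = (1 + Real.sqrt 5)/4 := Real.cos_pi_div_five
  have hd : Real.sin (2*π/5) = 2 * Real.sin (π/5) * Real.cos (π/5) := by
    rw [show 2*π/5 = 2*(π/5) by ring, Real.sin_two_mul]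
  have hs : Real.sin (π/5) ^ 2 = 1 - Real.cos (π/5) ^ 2 := by
    have := Real.sin_sq_add_cos_sq (π/5)
    linarith
  have h5 : Real.sqrt 5 * Real.sqrt 5 = 5 := Real.mul_self_sqrt (by norm_num)
  rw [hd, hc] at *
  linear_combination ((1 + Real.sqrt 5)/2) * hs - ((3 + Real.sqrt 5)/32) * h5

lemma my_quint {w : ℝ} (hw : 0 < w) :
    Real.Gamma (w/5) * Real.Gamma ((w+1)/5) * Real.Gamma ((w+2)/5) * Real.Gamma ((w+3)/5) *
        Real.Gamma ((w+4)/5)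
      = 4 * Real.sqrt 5 * π^2 * (5:ℝ) ^ (-w) * Real.Gamma w := by
  have h := my_gauss_mul 5 (by norm_num) hw
  norm_num [Finset.prod_range_succ, Real.Gamma_one] at h
  rw [h]
  have r1 := Real.Gamma_mul_Gamma_one_sub (1/5)
  norm_num at r1
  rw [show π * (1/5) = π/5 by ring] at r1
  have r2 := Real.Gamma_mul_Gamma_one_sub (2/5)
  norm_num at r2
  rw [show π * (2/5) = 2*π/5 by ring] at r2
  have h5 : Real.sqrt 5 * Real.sqrt 5 = 5 := Real.mul_self_sqrt (by norm_num)
  have hconst : Real.Gamma (1/5) * Real.Gamma (2/5) * Real.Gamma (3/5) * Real.Gamma (4/5)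
      = 4 * Real.sqrt 5 * π^2 / 5 := by
    calc Real.Gamma (1/5) * Real.Gamma (2/5) * Real.Gamma (3/5) * Real.Gamma (4/5)
        = (Real.Gamma (1/5) * Real.Gamma (4/5)) * (Real.Gamma (2/5) * Real.Gamma (3/5)) := by ring
      _ = (π / Real.sin (π/5)) * (π / Real.sin (2*π/5)) := by rw [r1, r2]
      _ = π^2 / (Real.sin (π/5) * Real.sin (2*π/5)) := by ring
      _ = π^2 / (Real.sqrt 5 / 4) := by rw [my_sin_prod]
      _ = 4 * Real.sqrt 5 * π^2 / 5 := by
          rw [div_eq_div_iff (by positivity) (by norm_num)]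
          linear_combination (-(π^2)) * h5
  rw [show (5:ℝ) * (Real.Gamma (1/5) * Real.Gamma (2/5) * Real.Gamma (3/5) * Real.Gamma (4/5))
      = 5 * (4 * Real.sqrt 5 * π^2 / 5) by rw [hconst]]
  field_simp

theorem gamma_monomial_three_five :
    Real.Gamma (4 / 15) * Real.Gamma (1 / 5) / (Real.Gamma (1 / 3) * Real.Gamma (2 / 15))
      = (3 : ℝ) ^ (-(1 : ℝ) / 5) * (5 : ℝ) ^ ((1 : ℝ) / 12) *
        Real.sqrt (Real.sin (π / 3) * Real.sin (2 * π / 15) /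
          (Real.sin (4 * π / 15) * Real.sin (π / 5))) := by
  have pi0 := Real.pi_pos
  -- Gamma positivity
  have g4 : 0 < Real.Gamma (4/15) := Real.Gamma_pos_of_pos (by norm_num)
  have g15 : 0 < Real.Gamma (1/5) := Real.Gamma_pos_of_pos (by norm_num)
  have g13a : 0 < Real.Gamma (1/3) := Real.Gamma_pos_of_pos (by norm_num)
  have g2 : 0 < Real.Gamma (2/15) := Real.Gamma_pos_of_pos (by norm_num)
  have g23 : 0 < Real.Gamma (2/3) := Real.Gamma_pos_of_pos (by norm_num)
  have g13 : 0 < Real.Gamma (13/15) := Real.Gamma_pos_of_pos (by norm_num)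
  have g11 : 0 < Real.Gamma (11/15) := Real.Gamma_pos_of_pos (by norm_num)
  have g45 : 0 < Real.Gamma (4/5) := Real.Gamma_pos_of_pos (by norm_num)
  have g35 : 0 < Real.Gamma (3/5) := Real.Gamma_pos_of_pos (by norm_num)
  have g14 : 0 < Real.Gamma (14/15) := Real.Gamma_pos_of_pos (by norm_num)
  have g8 : 0 < Real.Gamma (8/15) := Real.Gamma_pos_of_pos (by norm_num)
  -- multiplication formula instances
  have T2 := my_trip (show (0:ℝ) < 4/5 by norm_num)
  norm_num at T2
  have T4 := my_trip (show (0:ℝ) < 3/5 by norm_num)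
  norm_num at T4
  have Q1 := my_quint (show (0:ℝ) < 2/3 by norm_num)
  norm_num at Q1
  -- reflection instances
  have R13 := Real.Gamma_mul_Gamma_one_sub (1/3)
  norm_num at R13
  rw [show π * (1/3) = π/3 by ring] at R13
  have R215 := Real.Gamma_mul_Gamma_one_sub (2/15)
  norm_num at R215
  rw [show π * (2/15) = 2*π/15 by ring] at R215
  have R415 := Real.Gamma_mul_Gamma_one_sub (4/15)
  norm_num at R415
  rw [show π * (4/15) = 4*π/15 by ring] at R415
  have R15 := Real.Gamma_mul_Gamma_one_sub (1/5)
  norm_num at R15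
  rw [show π * (1/5) = π/5 by ring] at R15
  -- sine positivity
  have s1 : 0 < Real.sin (π/3) := Real.sin_pos_of_pos_of_lt_pi (by positivity) (by linarith)
  have s2 : 0 < Real.sin (2*π/15) := Real.sin_pos_of_pos_of_lt_pi (by positivity) (by linarith)
  have s3 : 0 < Real.sin (4*π/15) := Real.sin_pos_of_pos_of_lt_pi (by positivity) (by linarith)
  have s4 : 0 < Real.sin (π/5) := Real.sin_pos_of_pos_of_lt_pi (by positivity) (by linarith)
  -- sines as gammas
  have e1 : Real.sin (π/3) = π / (Real.Gamma (1/3) * Real.Gamma (2/3)) := by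
    rw [R13]; field_simp; try ring
  have e2 : Real.sin (2*π/15) = π / (Real.Gamma (2/15) * Real.Gamma (13/15)) := by
    rw [R215]; field_simp; try ring
  have e3 : Real.sin (4*π/15) = π / (Real.Gamma (4/15) * Real.Gamma (11/15)) := by
    rw [R415]; field_simp; try ring
  have e4 : Real.sin (π/5) = π / (Real.Gamma (1/5) * Real.Gamma (4/5)) := by
    rw [R15]; field_simp; try ring
  -- the constant identity
  have h3 : Real.sqrt 3 * Real.sqrt 3 = 3 := Real.mul_self_sqrt (by norm_num)
  have h5 : Real.sqrt 5 * Real.sqrt 5 = 5 := Real.mul_self_sqrt (by norm_num)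
  have f3 : (3:ℝ) ^ (-(4/5) : ℝ) * (3:ℝ) ^ (-(3/5) : ℝ) * (3:ℝ) ^ ((2/5) : ℝ) = 1/3 := by
    rw [← Real.rpow_add (by norm_num), ← Real.rpow_add (by norm_num),
      show (-(4/5) + -(3/5) + 2/5 : ℝ) = -1 by norm_num, Real.rpow_neg_one]
    norm_num
  have f5 : Real.sqrt 5 * ((5:ℝ) ^ ((1/6) : ℝ) * (5:ℝ) ^ (-(2/3) : ℝ)) = 1 := by
    rw [← Real.rpow_add (by norm_num),
      show ((1/6) + -(2/3) : ℝ) = -(1/2) by norm_num,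
      Real.sqrt_eq_rpow 5,
      ← Real.rpow_add (by norm_num)]
    norm_num
  have hK : (2*Real.sqrt 3*π*(3:ℝ)^(-(4/5):ℝ)) * (2*Real.sqrt 3*π*(3:ℝ)^(-(3/5):ℝ)) *
      (3:ℝ)^((2/5):ℝ) = (5:ℝ)^((1/6):ℝ) * (4*Real.sqrt 5*π^2*(5:ℝ)^(-(2/3):ℝ)) := by
    linear_combination (4*π^2*Real.sqrt 3*Real.sqrt 3) * f3 + (4*π^2/3) * h3 - (4*π^2) * f5
  -- the key monomial relation
  have star : Real.Gamma (4/15) * Real.Gamma (1/5) * Real.Gamma (2/3) * Real.Gamma (13/15) *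
      (3:ℝ)^((2/5):ℝ)
      = (5:ℝ)^((1/6):ℝ) * (Real.Gamma (1/3) * Real.Gamma (2/15) * Real.Gamma (11/15) *
        Real.Gamma (4/5)) := by
    apply mul_right_cancel₀ (b := Real.Gamma (3/5) * Real.Gamma (14/15) * Real.Gamma (8/15) *
      Real.Gamma (2/15) * Real.Gamma (1/3) * Real.Gamma (11/15)) (by positivity)
    linear_combination
      ((Real.Gamma (1/5) * Real.Gamma (8/15) * Real.Gamma (13/15)) *
        (Real.Gamma (2/3) * (3:ℝ)^((2/5):ℝ) * Real.Gamma (2/15) * Real.Gamma (1/3) *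
          Real.Gamma (11/15))) * T2 +
      ((2*Real.sqrt 3*π*(3:ℝ)^(-(4/5):ℝ) * Real.Gamma (4/5)) *
        (Real.Gamma (2/3) * (3:ℝ)^((2/5):ℝ) * Real.Gamma (2/15) * Real.Gamma (1/3) *
          Real.Gamma (11/15))) * T4 -
      ((5:ℝ)^((1/6):ℝ) * Real.Gamma (4/5) * Real.Gamma (3/5) * Real.Gamma (2/15) *
        Real.Gamma (1/3) * Real.Gamma (11/15)) * Q1 +
      (Real.Gamma (4/5) * Real.Gamma (3/5) * Real.Gamma (2/3) * Real.Gamma (2/15) *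
        Real.Gamma (1/3) * Real.Gamma (11/15)) * hK
  -- convert the exponent
  have h35 : (3:ℝ)^(-(2/5):ℝ) * (3:ℝ)^((2/5):ℝ) = 1 := by
    rw [← Real.rpow_add (by norm_num)]; norm_num
  have star' : Real.Gamma (4/15) * Real.Gamma (1/5) * Real.Gamma (2/3) * Real.Gamma (13/15)
      = (3:ℝ)^(-(2/5):ℝ) * (5:ℝ)^((1/6):ℝ) * (Real.Gamma (1/3) * Real.Gamma (2/15) *
        Real.Gamma (11/15) * Real.Gamma (4/5)) := by
    linear_combination (3:ℝ)^(-(2/5):ℝ) * star -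
      (Real.Gamma (4/15) * Real.Gamma (1/5) * Real.Gamma (2/3) * Real.Gamma (13/15)) * h35
  have hc2 : ((3:ℝ)^(-(1:ℝ)/5) * (5:ℝ)^((1:ℝ)/12))^2
      = (3:ℝ)^(-(2/5):ℝ) * (5:ℝ)^((1/6):ℝ) := by
    rw [mul_pow, pow_two, pow_two, ← Real.rpow_add (by norm_num : (0:ℝ) < 3),
      ← Real.rpow_add (by norm_num : (0:ℝ) < 5)]
    norm_num
  -- the sine quotient in terms of Gamma values
  have hSg : Real.sin (π/3) * Real.sin (2*π/15) / (Real.sin (4*π/15) * Real.sin (π/5))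
      = (Real.Gamma (4/15) * Real.Gamma (11/15) * (Real.Gamma (1/5) * Real.Gamma (4/5))) /
        ((Real.Gamma (1/3) * Real.Gamma (2/3)) * (Real.Gamma (2/15) * Real.Gamma (13/15))) := by
    rw [e1, e2, e3, e4]
    rw [div_eq_div_iff (by positivity) (by positivity)]
    field_simp
  have hsq' : Real.sin (π/3) * Real.sin (2*π/15) / (Real.sin (4*π/15) * Real.sin (π/5))
      = ((Real.Gamma (4/15) * Real.Gamma (1/5) / (Real.Gamma (1/3) * Real.Gamma (2/15))) /
         ((3:ℝ)^(-(1:ℝ)/5) * (5:ℝ)^((1:ℝ)/12)))^2 := by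
    rw [hSg, div_pow, div_pow, hc2, div_div,
      div_eq_div_iff (by positivity) (by positivity)]
    linear_combination (-(Real.Gamma (4/15) * Real.Gamma (1/5) * Real.Gamma (1/3) *
      Real.Gamma (2/15))) * star'
  rw [show (3:ℝ) ^ (-(1:ℝ)/5) * (5:ℝ) ^ ((1:ℝ)/12) *
      Real.sqrt (Real.sin (π/3) * Real.sin (2*π/15) / (Real.sin (4*π/15) * Real.sin (π/5)))
      = (3:ℝ) ^ (-(1:ℝ)/5) * (5:ℝ) ^ ((1:ℝ)/12) *
        ((Real.Gamma (4/15) * Real.Gamma (1/5) / (Real.Gamma (1/3) * Real.Gamma (2/15))) /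
         ((3:ℝ)^(-(1:ℝ)/5) * (5:ℝ)^((1:ℝ)/12))) by
    rw [hsq', Real.sqrt_sq (by positivity)]]
  field_simp
end

section
/- First Das identity: Let 𝒜' be an abelian group with an involution σ (i.e., σ² = id), let H: 𝒜' → 𝒜' be an idempotent endomorphism satisfying H + σHσ = id, and let Y_p, Y_q be endomorphisms of a larger abelian group 𝒜 ⊇ 𝒜' commuting with each other and with σ, stabilizing 𝒜'. If x ∈ 𝒜 satisfies Y_p x, Y_q x ∈ 𝒜' and (1-σ)x = 0, then 2(HY_pHY_q - HY_qHY_p)x = (Y_pHY_q - Y_qHY_p)x + (1+σ)(HY_pHY_q - HY_qHY_p)x. -/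
/-- The first Das identity. -/
theorem first_das_identity
    (A : Type*) [AddCommGroup A] (A' : AddSubgroup A)
    (σ Yp Yq H : A →+ A)
    (hσ2 : ∀ x : A, σ (σ x) = x)
    (hσYp : ∀ x : A, σ (Yp x) = Yp (σ x))
    (hσYq : ∀ x : A, σ (Yq x) = Yq (σ x))
    (hYpYq : ∀ x : A, Yp (Yq x) = Yq (Yp x))
    (hσA' : ∀ x ∈ A', σ x ∈ A')
    (hYpA' : ∀ x ∈ A', Yp x ∈ A')
    (hYqA' : ∀ x ∈ A', Yq x ∈ A')
    (hHA' : ∀ x ∈ A', H x ∈ A')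
    (hHidem : ∀ x ∈ A', H (H x) = H x)
    (hHlift : ∀ x ∈ A', H x + σ (H (σ x)) = x)
    (x : A) (hxp : Yp x ∈ A') (hxq : Yq x ∈ A') (hx : x - σ x = 0) :
    2 • (H (Yp (H (Yq x))) - H (Yq (H (Yp x))))
      = (Yp (H (Yq x)) - Yq (H (Yp x)))
        + ((H (Yp (H (Yq x))) - H (Yq (H (Yp x))))
            + σ (H (Yp (H (Yq x))) - H (Yq (H (Yp x))))) := by
  have hσx : σ x = x := by
    have := sub_eq_zero.mp hx; exact this.symm
  set a := H (Yq x) with ha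
  set b := H (Yp x) with hb
  have haA : a ∈ A' := hHA' _ hxq
  have hbA : b ∈ A' := hHA' _ hxp
  -- σ a = Yq x - a
  have haσ : σ a = Yq x - a := by
    have h := hHlift (Yq x) hxq
    rw [hσYq, hσx] at h
    exact eq_sub_of_add_eq' h
  have hbσ : σ b = Yp x - b := by
    have h := hHlift (Yp x) hxp
    rw [hσYp, hσx] at h
    exact eq_sub_of_add_eq' h
  -- u := Yp a - Yq b is anti-invariant
  have huA : Yp a - Yq b ∈ A' := sub_mem (hYpA' a haA) (hYqA' b hbA)
  have huσ : σ (Yp a - Yq b) = -(Yp a - Yq b) := by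
    rw [map_sub, hσYp, hσYq, haσ, hbσ, map_sub, map_sub, hYpYq]
    abel
  -- lifting applied to u
  have key := hHlift _ huA
  rw [huσ, map_neg, map_neg] at key
  -- key : H (Yp a - Yq b) + -(σ (H (Yp a - Yq b))) = Yp a - Yq b
  have hT : H (Yp a) - H (Yq b) = H (Yp a - Yq b) := (map_sub H _ _).symm
  rw [hT, two_smul]
  nth_rewrite 3 [← key]
  abel
end

section
/- Second Das identity: With 𝒜, 𝒜', σ, Y_p, Y_q as below, let H and H̄ be two lifting operators on 𝒜', and let x ∈ 𝒜 satisfy Y_p x, Y_q x ∈ 𝒜' and (1-σ)x = 0. Put a := (HY_pHY_q - HY_qHY_p)x, ā := (H̄Y_pH̄Y_q - H̄Y_qH̄Y_p)x, b := (Y_pH(H-H̄)Y_q - Y_qH(H-H̄)Y_p)x, and c := H(a - ā) - Hb. Then a - ā = b + (1+σ)c. -/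
/-- The second Das identity. -/
theorem second_das_identity
    (A : Type*) [AddCommGroup A] (A' : AddSubgroup A)
    (σ Yp Yq H H' : A →+ A)
    (hσ2 : ∀ x : A, σ (σ x) = x)
    (hσYp : ∀ x : A, σ (Yp x) = Yp (σ x))
    (hσYq : ∀ x : A, σ (Yq x) = Yq (σ x))
    (hYpYq : ∀ x : A, Yp (Yq x) = Yq (Yp x))
    (hσA' : ∀ x ∈ A', σ x ∈ A')
    (hYpA' : ∀ x ∈ A', Yp x ∈ A')
    (hYqA' : ∀ x ∈ A', Yq x ∈ A')
    (hHA' : ∀ x ∈ A', H x ∈ A')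
    (hH'A' : ∀ x ∈ A', H' x ∈ A')
    (hHidem : ∀ x ∈ A', H (H x) = H x)
    (hHlift : ∀ x ∈ A', H x + σ (H (σ x)) = x)
    (hH'idem : ∀ x ∈ A', H' (H' x) = H' x)
    (hH'lift : ∀ x ∈ A', H' x + σ (H' (σ x)) = x)
    (x : A) (hxp : Yp x ∈ A') (hxq : Yq x ∈ A') (hx : x - σ x = 0)
    (a abar b c : A)
    (ha : a = H (Yp (H (Yq x))) - H (Yq (H (Yp x))))
    (habar : abar = H' (Yp (H' (Yq x))) - H' (Yq (H' (Yp x))))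
    (hb : b = Yp (H (H (Yq x) - H' (Yq x))) - Yq (H (H (Yp x) - H' (Yp x))))
    (hc : c = H (a - abar) - H b) :
    a - abar = b + (c + σ c) := by
  have hσx : σ x = x := by
    have h := sub_eq_zero.mp hx; exact h.symm
  -- σ against H on A'
  have hσH : ∀ z ∈ A', σ (H z) = σ z - H (σ z) := by
    intro z hz
    have h := hHlift (σ z) (hσA' z hz)
    rw [hσ2] at h
    rw [eq_sub_iff_add_eq, add_comm]; exact h
  have hσH' : ∀ z ∈ A', σ (H' z) = σ z - H' (σ z) := by
    intro z hz
    have h := hH'lift (σ z) (hσA' z hz)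
    rw [hσ2] at h
    rw [eq_sub_iff_add_eq, add_comm]; exact h
  have hσq : σ (Yq x) = Yq x := by rw [hσYq, hσx]
  have hσp : σ (Yp x) = Yp x := by rw [hσYp, hσx]
  have h1 : σ (H (Yq x)) = Yq x - H (Yq x) := by rw [hσH _ hxq, hσq]
  have h2 : σ (H (Yp x)) = Yp x - H (Yp x) := by rw [hσH _ hxp, hσp]
  have h1' : σ (H' (Yq x)) = Yq x - H' (Yq x) := by rw [hσH' _ hxq, hσq]
  have h2' : σ (H' (Yp x)) = Yp x - H' (Yp x) := by rw [hσH' _ hxp, hσp]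
  -- memberships
  have mHq := hHA' _ hxq
  have mHp := hHA' _ hxp
  have mH'q := hH'A' _ hxq
  have mH'p := hH'A' _ hxp
  have mpHq := hYpA' _ mHq
  have mqHp := hYqA' _ mHp
  have mpH'q := hYpA' _ mH'q
  have mqH'p := hYqA' _ mH'p
  have mu : H (Yq x) - H' (Yq x) ∈ A' := A'.sub_mem mHq mH'q
  have mv : H (Yp x) - H' (Yp x) ∈ A' := A'.sub_mem mHp mH'p
  -- σ a
  have hs1 : σ (Yp (H (Yq x))) = Yp (Yq x) - Yp (H (Yq x)) := by
    rw [hσYp, h1, map_sub]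
  have hs2 : σ (Yq (H (Yp x))) = Yq (Yp x) - Yq (H (Yp x)) := by
    rw [hσYq, h2, map_sub]
  have hs1' : σ (Yp (H' (Yq x))) = Yp (Yq x) - Yp (H' (Yq x)) := by
    rw [hσYp, h1', map_sub]
  have hs2' : σ (Yq (H' (Yp x))) = Yq (Yp x) - Yq (H' (Yp x)) := by
    rw [hσYq, h2', map_sub]
  have hT1 : σ (H (Yp (H (Yq x))))
      = Yp (Yq x) - Yp (H (Yq x)) - (H (Yp (Yq x)) - H (Yp (H (Yq x)))) := by
    rw [hσH _ mpHq, hs1, map_sub]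
  have hT2 : σ (H (Yq (H (Yp x))))
      = Yq (Yp x) - Yq (H (Yp x)) - (H (Yq (Yp x)) - H (Yq (H (Yp x)))) := by
    rw [hσH _ mqHp, hs2, map_sub]
  have hT1' : σ (H' (Yp (H' (Yq x))))
      = Yp (Yq x) - Yp (H' (Yq x)) - (H' (Yp (Yq x)) - H' (Yp (H' (Yq x)))) := by
    rw [hσH' _ mpH'q, hs1', map_sub]
  have hT2' : σ (H' (Yq (H' (Yp x))))
      = Yq (Yp x) - Yq (H' (Yp x)) - (H' (Yq (Yp x)) - H' (Yq (H' (Yp x)))) := by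
    rw [hσH' _ mqH'p, hs2', map_sub]
  -- σ b
  have hσu : σ (H (Yq x) - H' (Yq x)) = -(H (Yq x) - H' (Yq x)) := by
    rw [map_sub, h1, h1']; abel
  have hσv : σ (H (Yp x) - H' (Yp x)) = -(H (Yp x) - H' (Yp x)) := by
    rw [map_sub, h2, h2']; abel
  have hσHu : σ (H (H (Yq x) - H' (Yq x)))
      = H (H (Yq x) - H' (Yq x)) - (H (Yq x) - H' (Yq x)) := by
    have hHneg : H (-(H (Yq x) - H' (Yq x))) = -H (H (Yq x) - H' (Yq x)) := map_neg H _
    rw [hσH _ mu, hσu, hHneg]; abel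
  have hσHv : σ (H (H (Yp x) - H' (Yp x)))
      = H (H (Yp x) - H' (Yp x)) - (H (Yp x) - H' (Yp x)) := by
    have hHneg : H (-(H (Yp x) - H' (Yp x))) = -H (H (Yp x) - H' (Yp x)) := map_neg H _
    rw [hσH _ mv, hσv, hHneg]; abel
  -- σ (a - abar - b) = a - abar - b
  have hcomm := hYpYq x
  have hHcomm : H (Yp (Yq x)) = H (Yq (Yp x)) := by rw [hcomm]
  have hH'comm : H' (Yp (Yq x)) = H' (Yq (Yp x)) := by rw [hcomm]
  have hYpu : Yp (H (Yq x) - H' (Yq x)) = Yp (H (Yq x)) - Yp (H' (Yq x)) := map_sub Yp _ _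
  have hYqv : Yq (H (Yp x) - H' (Yp x)) = Yq (H (Yp x)) - Yq (H' (Yp x)) := map_sub Yq _ _
  have ea : σ a = Yp (Yq x) - Yp (H (Yq x)) - (H (Yp (Yq x)) - H (Yp (H (Yq x))))
      - (Yq (Yp x) - Yq (H (Yp x)) - (H (Yq (Yp x)) - H (Yq (H (Yp x))))) := by
    rw [ha, map_sub, hT1, hT2]
  have eabar : σ abar = Yp (Yq x) - Yp (H' (Yq x)) - (H' (Yp (Yq x)) - H' (Yp (H' (Yq x))))
      - (Yq (Yp x) - Yq (H' (Yp x)) - (H' (Yq (Yp x)) - H' (Yq (H' (Yp x))))) := by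
    rw [habar, map_sub, hT1', hT2']
  have eb : σ b = (Yp (H (H (Yq x) - H' (Yq x))) - Yp (H (Yq x) - H' (Yq x)))
      - (Yq (H (H (Yp x) - H' (Yp x))) - Yq (H (Yp x) - H' (Yp x))) := by
    rw [hb, map_sub, hσYp, hσYq, hσHu, hσHv, map_sub Yp, map_sub Yq]
  have hσy : σ (a - abar - b) = a - abar - b := by
    rw [map_sub, map_sub, ea, eabar, eb, hYpu, hYqv]
    rw [ha, habar, hb, hHcomm, hH'comm, hcomm]
    abel
  -- membership of y
  have my : a - abar - b ∈ A' := by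
    refine A'.sub_mem (A'.sub_mem ?_ ?_) ?_
    · rw [ha]; exact A'.sub_mem (hHA' _ mpHq) (hHA' _ mqHp)
    · rw [habar]; exact A'.sub_mem (hH'A' _ mpH'q) (hH'A' _ mqH'p)
    · rw [hb]; exact A'.sub_mem (hYpA' _ (hHA' _ mu)) (hYqA' _ (hHA' _ mv))
  -- conclude via lifting
  have hcy : c = H (a - abar - b) := by rw [hc, ← map_sub]
  have hlift := hHlift _ my
  rw [hσy, ← hcy] at hlift
  -- hlift : c + σ c = a - abar - b
  rw [hlift]; abel
end
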